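/- (Gottschalk–Hedlund) Let X be a compact metric space, T : X → X a minimal homeomorphism, and f : X → ℝ continuous. If there exists a point x₀ ∈ X and a constant M such that |∑_{i=0}^{n-1} f(Tⁱ x₀)| ≤ M for all n ∈ ℕ, then there exists a continuous function γ : X → ℝ with f = γ ∘ T - γ. -/

import Mathlib

open Set

/-- Every nonempty compact forward-invariant set contains a minimal one. -/
lemma exists_minimal_invariant {α : Type*} [TopologicalSpace α] [T2Space α]
    (S : α → α) (Y : Set α) (hY : IsCompact Y) (hne : Y.Nonempty)
    (hinv : S '' Y ⊆ Y) :
    ∃ K, K ⊆ Y ∧ IsClosed K ∧ IsCompact K ∧ K.Nonempty ∧ S '' K ⊆ K ∧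
      ∀ L, L ⊆ K → IsClosed L → L.Nonempty → S '' L ⊆ L → L = K := by
  set 𝒮 : Set (Set α) := {K | K ⊆ Y ∧ IsClosed K ∧ K.Nonempty ∧ S '' K ⊆ K} with h𝒮
  have hcompact : ∀ K ∈ 𝒮, IsCompact K := fun K hK =>
    hY.of_isClosed_subset hK.2.1 hK.1
  have hYS : Y ∈ 𝒮 := ⟨subset_rfl, hY.isClosed, hne, hinv⟩
  have hzorn : ∀ c ⊆ 𝒮, IsChain (· ⊆ ·) c → c.Nonempty → ∃ lb ∈ 𝒮, ∀ s ∈ c, lb ⊆ s := by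
    intro c hc hchain hcne
    haveI : Nonempty c := hcne.to_subtype
    have hdir : Directed (· ⊇ ·) (fun s : c => (s : Set α)) := by
      rintro s t
      rcases hchain.total s.2 t.2 with h | h
      · exact ⟨s, Set.Subset.rfl, h⟩
      · exact ⟨t, h, Set.Subset.rfl⟩
    have hlbne : (⋂ s : c, (s : Set α)).Nonempty := by
      exact IsCompact.nonempty_iInter_of_directed_nonempty_isCompact_isClosed
        (fun s : c => (s : Set α)) hdir (fun s => (hc s.2).2.2.1)
        (fun s => hcompact s (hc s.2)) (fun s => (hc s.2).2.1)
    refine ⟨⋂ s : c, (s : Set α), ⟨?_, ?_, hlbne, ?_⟩, ?_⟩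
    · obtain ⟨s, hs⟩ := hcne
      exact (iInter_subset (fun s : c => (s : Set α)) ⟨s, hs⟩).trans (hc hs).1
    · exact isClosed_iInter fun s => (hc s.2).2.1
    · rintro _ ⟨x, hx, rfl⟩
      refine mem_iInter.mpr fun s => ?_
      exact (hc s.2).2.2.2 ⟨x, mem_iInter.mp hx s, rfl⟩
    · intro s hs
      exact iInter_subset (fun s : c => (s : Set α)) ⟨s, hs⟩
  obtain ⟨m, hmY, hm⟩ := zorn_superset_nonempty 𝒮 hzorn Y hYS
  refine ⟨m, hm.1.1, hm.1.2.1, hcompact m hm.1, hm.1.2.2.1, hm.1.2.2.2, ?_⟩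
  intro L hLm hLcl hLne hLinv
  exact subset_antisymm hLm (hm.2 ⟨hLm.trans hm.1.1, hLcl, hLne, hLinv⟩ hLm)

/-- Gottschalk–Hedlund: for a minimal homeomorphism of a compact metric space,
a continuous function with bounded Birkhoff sums at one point is a continuous
coboundary. -/
theorem stmt_11 {X : Type*} [MetricSpace X] [CompactSpace X]
    (T : X ≃ₜ X)
    (hmin : ∀ x : X, Dense (Set.range fun n : ℤ => (T.toEquiv ^ n) x))
    (f : X → ℝ) (hf : Continuous f)
    (x₀ : X) (M : ℝ)
    (hbd : ∀ n : ℕ, |∑ i ∈ Finset.range n, f ((⇑T)^[i] x₀)| ≤ M) :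
    ∃ γ : X → ℝ, Continuous γ ∧ f = γ ∘ ⇑T - γ := by
  classical
  -- the skew product
  set S : X × ℝ → X × ℝ := fun p => (T p.1, p.2 + f p.1) with hSdef
  have hScont : Continuous S :=
    (T.continuous.comp continuous_fst).prodMk
      (continuous_snd.add (hf.comp continuous_fst))
  -- the forward orbit of (x₀, 0)
  have horbit : ∀ n : ℕ, S^[n] (x₀, 0) =
      ((⇑T)^[n] x₀, ∑ i ∈ Finset.range n, f ((⇑T)^[i] x₀)) := by
    intro n
    induction n with
    | zero => simp
    | succ n ih =>
      rw [Function.iterate_succ_apply', ih, hSdef]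
      simp only [Finset.sum_range_succ, Function.iterate_succ_apply']
  -- the box containing the orbit closure
  have hBclosed : IsClosed ((univ : Set X) ×ˢ Icc (-M) M) :=
    isClosed_univ.prod isClosed_Icc
  have hBcomp : IsCompact ((univ : Set X) ×ˢ Icc (-M) M) :=
    isCompact_univ.prod isCompact_Icc
  set Y : Set (X × ℝ) := closure (Set.range fun n : ℕ => S^[n] (x₀, 0)) with hYdef
  have hYB : Y ⊆ (univ : Set X) ×ˢ Icc (-M) M := by
    refine closure_minimal ?_ hBclosed
    rintro _ ⟨n, rfl⟩
    show S^[n] (x₀, 0) ∈ _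
    rw [horbit n]
    have := abs_le.mp (hbd n)
    exact ⟨mem_univ _, this.1, this.2⟩
  have hYcomp : IsCompact Y := hBcomp.of_isClosed_subset isClosed_closure hYB
  have hYne : Y.Nonempty := ⟨(x₀, 0), subset_closure ⟨0, rfl⟩⟩
  have hYinv : S '' Y ⊆ Y := by
    refine (image_closure_subset_closure_image hScont).trans (closure_mono ?_)
    rintro _ ⟨_, ⟨n, rfl⟩, rfl⟩
    refine ⟨n + 1, ?_⟩
    show S^[n + 1] (x₀, 0) = S (S^[n] (x₀, 0))
    exact Function.iterate_succ_apply' S n (x₀, 0)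
  -- a minimal subset K
  obtain ⟨K, hKY, hKcl, hKcomp, hKne, hKinv, hKmin⟩ :=
    exists_minimal_invariant S Y hYcomp hYne hYinv
  -- second coordinates of K are bounded
  have hKbd : ∀ p ∈ K, p.2 ∈ Icc (-M) M := fun p hp => (hYB (hKY hp)).2
  -- S '' K = K
  have hSK : S '' K = K := by
    refine hKmin _ hKinv (hKcomp.image hScont).isClosed (hKne.image S) ?_
    exact image_mono hKinv
  -- the projection of K is all of X
  set A : Set X := Prod.fst '' K with hAdef
  have hAcl : IsClosed A := (hKcomp.image continuous_fst).isClosed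
  have hAT : ⇑T '' A = A := by
    have h1 : ⇑T '' A = Prod.fst '' (S '' K) := by
      rw [hAdef, image_image, image_image]
    rw [h1, hSK]
  have hfwd : ∀ a ∈ A, T a ∈ A := fun a ha => hAT ▸ mem_image_of_mem T ha
  have hbwd : ∀ a ∈ A, T.symm a ∈ A := by
    intro a ha
    rw [← hAT] at ha
    obtain ⟨b, hb, rfl⟩ := ha
    simpa using hb
  have hApow : ∀ n : ℤ, ∀ a ∈ A, (T.toEquiv ^ n) a ∈ A := by
    intro n
    induction n using Int.induction_on with
    | zero =>
      intro a ha
      simpa using ha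
    | succ n ih =>
      intro a ha
      have : T.toEquiv ^ ((n : ℤ) + 1) = T.toEquiv ^ (n : ℤ) * T.toEquiv :=
        zpow_add_one _ _
      rw [this, Equiv.Perm.mul_apply]
      exact ih _ (hfwd a ha)
    | pred n ih =>
      intro a ha
      have : T.toEquiv ^ (-(n : ℤ) - 1) = T.toEquiv ^ (-(n : ℤ)) * T.toEquiv⁻¹ :=
        zpow_sub_one _ _
      rw [this, Equiv.Perm.mul_apply]
      have h2 : (T.toEquiv⁻¹) a = T.symm a := rfl
      rw [h2]
      exact ih _ (hbwd a ha)
  have hAuniv : A = univ := by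
    obtain ⟨p, hp⟩ := hKne
    have hx : p.1 ∈ A := mem_image_of_mem _ hp
    have hsub : Set.range (fun n : ℤ => (T.toEquiv ^ n) p.1) ⊆ A := by
      rintro _ ⟨n, rfl⟩
      exact hApow n p.1 hx
    have := closure_minimal hsub hAcl
    rw [(hmin p.1).closure_eq] at this
    exact univ_subset_iff.mp this
  -- translation argument: K is a graph
  have key : ∀ c : ℝ, c ≠ 0 → ∀ x a, (x, a) ∈ K → (x, a + c) ∈ K → False := by
    intro c hc x a ha hac
    set τ : X × ℝ → X × ℝ := fun p => (p.1, p.2 + c) with hτdef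
    have hτcont : Continuous τ := continuous_fst.prodMk (continuous_snd.add continuous_const)
    have hcomm : ∀ p, S (τ p) = τ (S p) := by
      intro p
      simp only [hSdef, hτdef]
      exact Prod.ext rfl (by ring)
    have hSτ : S '' (τ '' K) = τ '' K := by
      calc S '' (τ '' K) = (fun p => S (τ p)) '' K := image_image _ _ _
        _ = (fun p => τ (S p)) '' K := by simp only [hcomm]
        _ = τ '' (S '' K) := (image_image _ _ _).symm
        _ = τ '' K := by rw [hSK]
    have hL : τ '' K ∩ K = K := by
      refine hKmin _ inter_subset_right
        (((hKcomp.image hτcont).isClosed).inter hKcl) ⟨(x, a + c), ⟨(x, a), ha, rfl⟩, hac⟩ ?_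
      refine (image_inter_subset S _ _).trans ?_
      rw [hSτ, hSK]
    have hstep : ∀ p ∈ K, (p.1, p.2 - c) ∈ K := by
      intro p hp
      have hpτ : p ∈ τ '' K := by
        rw [← hL] at hp
        exact hp.1
      obtain ⟨q, hq, hqp⟩ := hpτ
      rw [hτdef] at hqp
      have h1 : q.1 = p.1 := by rw [← hqp]
      have h2 : q.2 + c = p.2 := by rw [← hqp]
      have h3 : q = (p.1, p.2 - c) := Prod.ext h1 (show q.2 = p.2 - c by linarith)
      rwa [h3] at hq
    have hiter : ∀ n : ℕ, (x, a - n * c) ∈ K := by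
      intro n
      induction n with
      | zero => simpa using ha
      | succ n ih =>
        have := hstep _ ih
        simpa [sub_sub, add_mul, Nat.cast_succ] using this
    -- derive a contradiction from boundedness
    rcases lt_or_gt_of_ne hc with hneg | hpos
    · -- c < 0 : a - n*c → +∞
      obtain ⟨n, hn⟩ := exists_nat_gt ((M - a) / (-c))
      have h1 := (hKbd _ (hiter n)).2
      have hc' : 0 < -c := by linarith
      have : (M - a) / (-c) * (-c) < n * (-c) :=
        mul_lt_mul_of_pos_right hn hc'
      rw [div_mul_cancel₀ _ (ne_of_gt hc')] at this
      simp only [] at h1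
      nlinarith
    · -- c > 0 : a - n*c → -∞
      obtain ⟨n, hn⟩ := exists_nat_gt ((a + M) / c)
      have h1 := (hKbd _ (hiter n)).1
      have : (a + M) / c * c < n * c := mul_lt_mul_of_pos_right hn hpos
      rw [div_mul_cancel₀ _ (ne_of_gt hpos)] at this
      simp only [] at h1
      nlinarith
  have hgraph : ∀ x a b, (x, a) ∈ K → (x, b) ∈ K → a = b := by
    intro x a b ha hb
    by_contra hne'
    rcases lt_or_gt_of_ne hne' with h | h
    · exact key (b - a) (by linarith) x a ha (by simpa using hb)
    · exact key (a - b) (by linarith) x b hb (by simpa using ha)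
  -- build γ from the graph K
  have hsurj : ∀ x : X, ∃ t : ℝ, (x, t) ∈ K := by
    intro x
    have : x ∈ A := hAuniv ▸ mem_univ x
    obtain ⟨p, hp, hpx⟩ := this
    exact ⟨p.2, by rwa [← hpx, Prod.mk.eta]⟩
  have hbij : Function.Bijective (fun p : ↥K => (p : X × ℝ).1) := by
    constructor
    · rintro ⟨p, hp⟩ ⟨q, hq⟩ h
      simp only at h
      have h2 : p.2 = q.2 := by
        apply hgraph p.1 p.2 q.2
        · simpa [Prod.mk.eta] using hp
        · rw [h]; simpa [Prod.mk.eta] using hq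
      exact Subtype.ext (Prod.ext h h2)
    · intro x
      obtain ⟨t, ht⟩ := hsurj x
      exact ⟨⟨(x, t), ht⟩, rfl⟩
  set e : ↥K ≃ X := Equiv.ofBijective _ hbij with hedef
  haveI : CompactSpace ↥K := isCompact_iff_compactSpace.mp hKcomp
  have hecont : Continuous ⇑e := continuous_fst.comp continuous_subtype_val
  set h : ↥K ≃ₜ X := hecont.homeoOfEquivCompactToT2 with hhdef
  set γ : X → ℝ := fun x => ((h.symm x : ↥K) : X × ℝ).2 with hγdef
  have hγcont : Continuous γ :=
    continuous_snd.comp (continuous_subtype_val.comp h.symm.continuous)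
  have hγK : ∀ x, (x, γ x) ∈ K := by
    intro x
    have h1 : ((h.symm x : ↥K) : X × ℝ).1 = x := h.apply_symm_apply x
    have h2 : ((h.symm x : ↥K) : X × ℝ) = (x, γ x) := Prod.ext h1 rfl
    have := (h.symm x).2
    rwa [h2] at this
  have hcocycle : ∀ x, γ (T x) = γ x + f x := by
    intro x
    have h1 : (T x, γ x + f x) ∈ K := hKinv ⟨(x, γ x), hγK x, rfl⟩
    exact hgraph (T x) _ _ (hγK (T x)) h1
  refine ⟨γ, hγcont, ?_⟩
  funext x
  simp only [Pi.sub_apply, Function.comp_apply, hcocycle x]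
  ring
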